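/- Let a rooted tree on {1,…,d} with bond dimensions r_w (r_{r₀} = 1) be given and let p : ∏_{k=1}^d [n_k] → ℝ be the TTNS contraction of TTNS cores {G_k}_{k=1}^d. For each node k, view G_k as a 3-tensor whose middle index is x_k ∈ [n_k], whose first index is the joint children index β ∈ ∏_{w∈C(k)}[r_w], and whose third index is α_k ∈ [r_k], and set ⦀G_k⦀ := max_{x_k} ‖G_k(·,x_k,·)‖ (spectral norm of the corresponding matrix slice). Then ‖p‖_∞ := max_x |p(x)| ≤ ∏_{k=1}^d ⦀G_k⦀. -/

import Mathlib

open scoped Classical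

noncomputable section

/-- A rooted tree on the vertex set `Fin d`: a root and a parent map fixing the root,
such that every vertex reaches the root under iteration of the parent map. -/
structure ParentTree (d : ℕ) where
  root : Fin d
  parent : Fin d → Fin d
  parent_root : parent root = root
  reaches_root : ∀ v : Fin d, ∃ m : ℕ, parent^[m] v = root

namespace ParentTree

variable {d : ℕ}

/-- The children of a node `k`. -/
def children (T : ParentTree d) (k : Fin d) : Set (Fin d) :=
  {w | w ≠ T.root ∧ w ≠ k ∧ T.parent w = k}

/-- The descendants of a node `w` (the "left" set `L(w)`). -/
def desc (T : ParentTree d) (w : Fin d) : Set (Fin d) :=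
  {v | v ≠ w ∧ ∃ m : ℕ, 1 ≤ m ∧ T.parent^[m] v = w}

end ParentTree

/-- The unfolding matrix `p(x_S; x_{Sᶜ})` of a `d`-dimensional tensor `p`. -/
def unfoldMatrix {d : ℕ} {n : Fin d → ℕ} (p : (∀ i, Fin (n i)) → ℝ)
    (S : Set (Fin d)) :
    Matrix ((i : S) → Fin (n i.1)) ((j : (Sᶜ : Set (Fin d))) → Fin (n j.1)) ℝ :=
  Matrix.of fun xS xSc =>
    p fun i => if h : i ∈ S then xS ⟨i, h⟩ else xSc ⟨i, h⟩

/-- The TTNS contraction of a family of cores `G k (β, x_k, α_k)`, where `β` is the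
joint index over the children bonds of `k` and `α_k` is the bond of `k` itself. -/
def ttnsContract {d : ℕ} (T : ParentTree d) (n r : Fin d → ℕ)
    (G : ∀ k : Fin d, ((w : T.children k) → Fin (r w.1)) → Fin (n k) → Fin (r k) → ℝ) :
    (∀ i, Fin (n i)) → ℝ :=
  fun x => ∑ α : (k : Fin d) → Fin (r k), ∏ k : Fin d, G k (fun w => α w.1) (x k) (α k)


/-- The spectral norm (`ℓ² → ℓ²` operator norm) of a real matrix. -/
def specNorm {m n : Type*} [Fintype m] [Fintype n] [DecidableEq n]
    (M : Matrix m n ℝ) : ℝ :=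
  ‖LinearMap.toContinuousLinearMap (Matrix.toEuclideanLin M)‖

/-- The `⦀·⦀` norm of a 3-tensor: the maximum over the middle index of the spectral
norm of the corresponding matrix slice. -/
def tnorm {r₁ X r₂ : Type*} [Fintype r₁] [Fintype X] [Fintype r₂] [DecidableEq r₂]
    (G : r₁ → X → r₂ → ℝ) : ℝ :=
  ⨆ x : X, specNorm (Matrix.of fun α β => G α x β)

open scoped Matrix.Norms.L2Operator Matrix

namespace ParentTree
variable {d : ℕ} (T : ParentTree d)

lemma iterate_root (m : ℕ) : T.parent^[m] T.root = T.root := by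
  induction m with
  | zero => rfl
  | succ m ih => rw [Function.iterate_succ_apply', ih, T.parent_root]

lemma periodic_eq_root {v : Fin d} {m : ℕ} (hm : 1 ≤ m) (h : T.parent^[m] v = v) :
    v = T.root := by
  obtain ⟨M, hM⟩ := T.reaches_root v
  have key : ∀ t : ℕ, T.parent^[t * m] v = v := by
    intro t
    induction t with
    | zero => simp
    | succ t ih => rw [Nat.succ_mul, Function.iterate_add_apply, h, ih]
  have h1 : T.parent^[(M + 1) * m] v = v := key (M + 1)
  have h3 : T.parent^[(M + 1) * m] v = T.root := by
    have h2 : M ≤ (M + 1) * m := by nlinarith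
    have he : (M + 1) * m = ((M + 1) * m - M) + M := by omega
    rw [he, Function.iterate_add_apply, hM, iterate_root]
  rw [h1] at h3; exact h3

lemma sibling_no_reach {k w w' : Fin d} (hw : w ∈ T.children k) (hw' : w' ∈ T.children k)
    {s : ℕ} (hs : 1 ≤ s) (h : T.parent^[s] w = w') : False := by
  have hkk : T.parent^[s] k = k := by
    have h1 : T.parent^[s+1] w = k := by
      rw [Function.iterate_succ_apply', h, hw'.2.2]
    have h2 : T.parent^[s+1] w = T.parent^[s] k := by
      rw [Function.iterate_succ_apply, hw.2.2]
    rw [h1] at h2; exact h2.symm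
  have hk : k = T.root := T.periodic_eq_root hs hkk
  have : w' = T.root := by
    obtain ⟨s', rfl⟩ : ∃ s', s = s' + 1 := ⟨s - 1, by omega⟩
    rw [Function.iterate_succ_apply, hw.2.2, hk, iterate_root] at h
    exact h.symm
  exact hw'.1 this

lemma children_subset_desc (k : Fin d) : T.children k ⊆ T.desc k := by
  intro w hw; exact ⟨hw.2.1, 1, le_refl 1, hw.2.2⟩

lemma desc_child_subset {k w : Fin d} (hw : w ∈ T.children k) : T.desc w ⊆ T.desc k := by
  intro v hv
  obtain ⟨m, hm, hmv⟩ := hv.2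
  have hreach : T.parent^[m+1] v = k := by
    rw [Function.iterate_succ_apply', hmv, hw.2.2]
  refine ⟨?_, m + 1, by omega, hreach⟩
  rintro rfl
  have hroot : v = T.root := T.periodic_eq_root (by omega : 1 ≤ m + 1) hreach
  rw [hroot, iterate_root] at hmv
  exact hw.1 hmv.symm

lemma children_of_desc_subset {k w : Fin d} (hw : w ∈ T.desc k) : T.children w ⊆ T.desc k := by
  intro u hu
  obtain ⟨m, hm, hmw⟩ := hw.2
  have hreach : T.parent^[m+1] u = k := by
    rw [Function.iterate_succ_apply, hu.2.2, hmw]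
  refine ⟨?_, m + 1, by omega, hreach⟩
  rintro rfl
  exact hu.1 (T.periodic_eq_root (by omega : 1 ≤ m + 1) hreach)

lemma not_mem_desc_self (k : Fin d) : k ∉ T.desc k := fun h => h.1 rfl

lemma desc_eq (k : Fin d) :
    T.desc k = T.children k ∪ ⋃ w ∈ T.children k, T.desc w := by
  apply Set.Subset.antisymm
  · have claim : ∀ m v, 1 ≤ m → T.parent^[m] v = k → v ≠ k →
        v ∈ T.children k ∪ ⋃ w ∈ T.children k, T.desc w := by
      intro m
      induction m with
      | zero => intro v h; omega
      | succ m ih =>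
        intro v _ hmk hvk
        rcases Nat.eq_zero_or_pos m with rfl | hm
        · simp only [zero_add, Function.iterate_one] at hmk
          have hvroot : v ≠ T.root := by
            rintro rfl
            exact hvk (by rw [T.parent_root] at hmk; rw [← hmk])
          exact Or.inl ⟨hvroot, hvk, hmk⟩
        · set w := T.parent^[m] v with hwdef
          have hpw : T.parent w = k := by
            rw [hwdef, ← Function.iterate_succ_apply' T.parent m v]; exact hmk
          by_cases hwk : w = k
          · exact ih v hm (hwdef ▸ hwk) hvk
          · have hwroot : w ≠ T.root := by
              rintro h
              rw [h, T.parent_root] at hpw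
              exact hwk (h.trans hpw)
            have hwc : w ∈ T.children k := ⟨hwroot, hwk, hpw⟩
            by_cases hvw : v = w
            · exact Or.inl (hvw ▸ hwc)
            · refine Or.inr ?_
              simp only [Set.mem_iUnion]
              exact ⟨w, hwc, hvw, m, hm, hwdef.symm⟩
    intro v hv
    obtain ⟨m, hm1, hmk⟩ := hv.2
    exact claim m v hm1 hmk hv.1
  · intro v hv
    rcases hv with h | h
    · exact T.children_subset_desc k h
    · simp only [Set.mem_iUnion] at h
      obtain ⟨w, hw, hvw⟩ := h
      exact T.desc_child_subset hw hvw

lemma children_disjoint_desc {k w : Fin d} (hw : w ∈ T.children k) :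
    Disjoint (T.children k) (T.desc w) := by
  rw [Set.disjoint_left]
  intro u hu hud
  obtain ⟨m, hm, hmu⟩ := hud.2
  exact T.sibling_no_reach hu hw hm hmu

lemma desc_sibling_disjoint {k w w' : Fin d} (hw : w ∈ T.children k) (hw' : w' ∈ T.children k)
    (hne : w ≠ w') : Disjoint (T.desc w) (T.desc w') := by
  have key : ∀ (a b : Fin d), a ∈ T.children k → b ∈ T.children k → a ≠ b →
      ∀ (v : Fin d) (m m' : ℕ), m ≤ m' → 1 ≤ m → 1 ≤ m' →
      T.parent^[m] v = a → T.parent^[m'] v = b → False := by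
    intro a b ha hb hab v m m' hle hm hm' hma hmb
    have h1 : T.parent^[m' - m] a = b := by
      rw [← hma, ← Function.iterate_add_apply]
      have he : m' - m + m = m' := by omega
      rw [he]; exact hmb
    rcases Nat.eq_zero_or_pos (m' - m) with h0 | hpos
    · rw [h0] at h1; exact hab h1
    · exact T.sibling_no_reach ha hb hpos h1
  rw [Set.disjoint_left]
  intro v hv hv'
  obtain ⟨m, hm, hmv⟩ := hv.2
  obtain ⟨m', hm', hmv'⟩ := hv'.2
  rcases le_or_gt m m' with h | h
  · exact key w w' hw hw' hne v m m' h hm hm' hmv hmv'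
  · exact key w' w hw' hw hne.symm v m' m (le_of_lt h) hm' hm hmv' hmv

lemma not_sibling_desc {k w w' : Fin d} (hw : w ∈ T.children k) (hw' : w' ∈ T.children k) :
    w ∉ T.desc w' := by
  intro h
  obtain ⟨m, hm, hmw⟩ := h.2
  exact T.sibling_no_reach hw hw' hm hmw

end ParentTree

section Pinned
variable {d : ℕ} {r : Fin d → ℕ} (pin : ∀ j, Fin (r j))

/-- The Finset of assignments that are free on `S` and pinned to `pin` outside `S`. -/
def pinnedFinset (S : Finset (Fin d)) : Finset (∀ j, Fin (r j)) :=
  Fintype.piFinset (fun j => if j ∈ S then (Finset.univ : Finset (Fin (r j))) else {pin j})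

lemma mem_pinnedFinset {S : Finset (Fin d)} {α : ∀ j, Fin (r j)} :
    α ∈ pinnedFinset pin S ↔ ∀ j ∉ S, α j = pin j := by
  simp only [pinnedFinset, Fintype.mem_piFinset]
  constructor
  · intro h j hj
    have := h j
    rw [if_neg hj] at this
    simpa using this
  · intro h j
    by_cases hj : j ∈ S
    · simp [hj]
    · simp [hj, h j hj]

/-- restriction of an assignment to `S`, pinned outside. -/
def restr (S : Finset (Fin d)) (α : ∀ j, Fin (r j)) : ∀ j, Fin (r j) :=
  fun j => if j ∈ S then α j else pin j

lemma restr_mem (S : Finset (Fin d)) (α : ∀ j, Fin (r j)) :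
    restr pin S α ∈ pinnedFinset pin S := by
  rw [mem_pinnedFinset]; intro j hj; simp [restr, hj]

/-- merge of two assignments along `S1`. -/
def mergeA (S1 : Finset (Fin d)) (α₁ α₂ : ∀ j, Fin (r j)) : ∀ j, Fin (r j) :=
  fun j => if j ∈ S1 then α₁ j else α₂ j

lemma sum_pinned_union (S1 S2 : Finset (Fin d)) (hdisj : Disjoint S1 S2)
    (f : (∀ j, Fin (r j)) → ℝ) :
    ∑ α ∈ pinnedFinset pin (S1 ∪ S2), f α
      = ∑ α₁ ∈ pinnedFinset pin S1, ∑ α₂ ∈ pinnedFinset pin S2, f (mergeA S1 α₁ α₂) := by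
  rw [← Finset.sum_product']
  refine Finset.sum_nbij' (fun α => (restr pin S1 α, restr pin S2 α))
    (fun p => mergeA S1 p.1 p.2) ?_ ?_ ?_ ?_ ?_
  · intro α hα
    exact Finset.mk_mem_product (restr_mem pin S1 α) (restr_mem pin S2 α)
  · intro p hp
    rw [Finset.mem_product] at hp
    rw [mem_pinnedFinset]
    intro j hj
    rw [Finset.mem_union] at hj; push_neg at hj
    simp only [mergeA, if_neg hj.1]
    exact (mem_pinnedFinset pin).1 hp.2 j hj.2
  · intro α hα
    funext j
    simp only [mergeA, restr]
    by_cases h1 : j ∈ S1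
    · simp [h1]
    · by_cases h2 : j ∈ S2
      · simp [h1, h2]
      · simp only [if_neg h1, if_neg h2]
        exact ((mem_pinnedFinset pin).1 hα j (by simp [h1, h2])).symm
  · intro p hp
    rw [Finset.mem_product] at hp
    have h1 := (mem_pinnedFinset pin).1 hp.1
    have h2 := (mem_pinnedFinset pin).1 hp.2
    ext1
    · funext j
      simp only [restr, mergeA]
      by_cases hj : j ∈ S1
      · simp [hj]
      · simp [hj, (h1 j hj).symm]
    · funext j
      simp only [restr, mergeA]
      by_cases hj : j ∈ S2
      · have : j ∉ S1 := fun h => Finset.disjoint_left.1 hdisj h hj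
        simp [hj, this]
      · by_cases hj1 : j ∈ S1
        · simp [hj, hj1, h2 j hj]
        · simp [hj, hj1, (h2 j hj).symm]
  · intro α hα
    congr 1
    funext j
    simp only [mergeA, restr]
    by_cases h1 : j ∈ S1
    · simp [h1]
    · by_cases h2 : j ∈ S2
      · simp [h1, h2]
      · simp only [if_neg h1, if_neg h2]
        exact ((mem_pinnedFinset pin).1 hα j (by simp [h1, h2]))

lemma pinnedFinset_empty : pinnedFinset pin (∅ : Finset (Fin d)) = {pin} := by
  ext α
  simp [mem_pinnedFinset, funext_iff]

lemma sum_pinned_biUnion (C : Finset (Fin d)) (t : Fin d → Finset (Fin d))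
    (hdisj : ∀ w ∈ C, ∀ w' ∈ C, w ≠ w' → Disjoint (t w) (t w'))
    (F : Fin d → (∀ j, Fin (r j)) → ℝ)
    (hloc : ∀ w ∈ C, ∀ γ γ', (∀ j ∈ t w, γ j = γ' j) → F w γ = F w γ') :
    ∑ α ∈ pinnedFinset pin (C.biUnion t), ∏ w ∈ C, F w α
      = ∏ w ∈ C, ∑ γ ∈ pinnedFinset pin (t w), F w γ := by
  induction C using Finset.induction with
  | empty => simp [pinnedFinset_empty]
  | @insert c C hc ih =>
    have hd : Disjoint (t c) (C.biUnion t) := by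
      rw [Finset.disjoint_biUnion_right]
      intro w hw
      exact hdisj c (Finset.mem_insert_self c C) w (Finset.mem_insert_of_mem hw)
        (fun h => hc (h ▸ hw))
    rw [Finset.biUnion_insert, sum_pinned_union pin _ _ hd]
    rw [Finset.prod_insert hc]
    have inner : ∀ α₁ ∈ pinnedFinset pin (t c), ∀ α₂ ∈ pinnedFinset pin (C.biUnion t),
        ∏ w ∈ insert c C, F w (mergeA (t c) α₁ α₂) = F c α₁ * ∏ w ∈ C, F w α₂ := by
      intro α₁ hα₁ α₂ hα₂
      rw [Finset.prod_insert hc]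
      congr 1
      · exact hloc c (Finset.mem_insert_self c C) _ _
          (fun j hj => by simp [mergeA, hj])
      · apply Finset.prod_congr rfl
        intro w hw
        apply hloc w (Finset.mem_insert_of_mem hw)
        intro j hj
        have : j ∉ t c := fun h =>
          Finset.disjoint_left.1 (hdisj c (Finset.mem_insert_self c C) w
            (Finset.mem_insert_of_mem hw) (fun h' => hc (h' ▸ hw))) h hj
        simp [mergeA, this]
    calc ∑ α₁ ∈ pinnedFinset pin (t c), ∑ α₂ ∈ pinnedFinset pin (C.biUnion t),
            ∏ w ∈ insert c C, F w (mergeA (t c) α₁ α₂)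
        = ∑ α₁ ∈ pinnedFinset pin (t c), ∑ α₂ ∈ pinnedFinset pin (C.biUnion t),
            F c α₁ * ∏ w ∈ C, F w α₂ := by
          apply Finset.sum_congr rfl; intro α₁ hα₁
          apply Finset.sum_congr rfl; intro α₂ hα₂
          exact inner α₁ hα₁ α₂ hα₂
      _ = (∑ α₁ ∈ pinnedFinset pin (t c), F c α₁) *
            (∑ α₂ ∈ pinnedFinset pin (C.biUnion t), ∏ w ∈ C, F w α₂) := by
          rw [Finset.sum_mul]
          apply Finset.sum_congr rfl; intro α₁ _
          rw [Finset.mul_sum]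
      _ = _ := by
          rw [ih (fun w hw w' hw' h => hdisj w (Finset.mem_insert_of_mem hw) w'
            (Finset.mem_insert_of_mem hw') h)
            (fun w hw => hloc w (Finset.mem_insert_of_mem hw))]

end Pinned

section NormFacts

lemma specNorm_nonneg {m n : Type*} [Fintype m] [Fintype n] [DecidableEq n]
    (M : Matrix m n ℝ) : 0 ≤ specNorm M := norm_nonneg _

lemma tnorm_nonneg {r₁ X r₂ : Type*} [Fintype r₁] [Fintype X] [Fintype r₂] [DecidableEq r₂]
    (G : r₁ → X → r₂ → ℝ) : 0 ≤ tnorm G :=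
  Real.iSup_nonneg (fun _ => specNorm_nonneg _)

lemma specNorm_le_tnorm {r₁ X r₂ : Type*} [Fintype r₁] [Fintype X] [Fintype r₂] [DecidableEq r₂]
    (G : r₁ → X → r₂ → ℝ) (y : X) : specNorm (Matrix.of fun α β => G α y β) ≤ tnorm G :=
  le_ciSup (f := fun y : X => specNorm (Matrix.of fun α β => G α y β))
    (Set.Finite.bddAbove (Set.finite_range _)) y

lemma specNorm_transpose {m n : Type*} [Fintype m] [Fintype n] [DecidableEq m] [DecidableEq n]
    (M : Matrix m n ℝ) : specNorm Mᵀ = specNorm M := by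
  show ‖Mᵀ‖ = ‖M‖
  rw [← Matrix.l2_opNorm_conjTranspose M]
  congr 1

lemma specNorm_mulVec {m n : Type*} [Fintype m] [Fintype n] [DecidableEq n]
    (M : Matrix m n ℝ) (u : EuclideanSpace ℝ n) :
    ‖(EuclideanSpace.equiv m ℝ).symm (M *ᵥ u)‖ ≤ specNorm M * ‖u‖ :=
  Matrix.l2_opNorm_mulVec M u

end NormFacts


section MainAux

variable {d : ℕ} (T : ParentTree d) (n r : Fin d → ℕ) (hr : ∀ w, 1 ≤ r w)
  (G : ∀ k : Fin d, ((w : T.children k) → Fin (r w.1)) → Fin (n k) → Fin (r k) → ℝ)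
  (x : ∀ i, Fin (n i))

/-- the default ((pin0 r hr)) bond assignment -/
def pin0 : ∀ j, Fin (r j) := fun j => ⟨0, hr j⟩

/-- descendants as a Finset -/
def descF (k : Fin d) : Finset (Fin d) := (T.desc k).toFinset

/-- children as a Finset -/
def chF (k : Fin d) : Finset (Fin d) := (T.children k).toFinset

lemma mem_descF {k j : Fin d} : j ∈ descF T k ↔ j ∈ T.desc k := Set.mem_toFinset

lemma mem_chF {k j : Fin d} : j ∈ chF T k ↔ j ∈ T.children k := Set.mem_toFinset

lemma not_mem_descF_self (k : Fin d) : k ∉ descF T k := by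
  rw [mem_descF]; exact T.not_mem_desc_self k

lemma descF_eq_biUnion (k : Fin d) :
    descF T k = (chF T k).biUnion (fun w => insert w (descF T w)) := by
  ext j
  simp only [mem_descF, Finset.mem_biUnion, Finset.mem_insert, mem_chF, mem_descF]
  rw [T.desc_eq k]
  simp only [Set.mem_union, Set.mem_iUnion]
  constructor
  · rintro (h | ⟨w, hw, hj⟩)
    · exact ⟨j, h, Or.inl rfl⟩
    · exact ⟨w, hw, Or.inr hj⟩
  · rintro ⟨w, hw, (rfl | hj)⟩
    · exact Or.inl hw
    · exact Or.inr ⟨w, hw, hj⟩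

lemma descF_eq_union (k : Fin d) :
    descF T k = chF T k ∪ (chF T k).biUnion (fun w => descF T w) := by
  rw [descF_eq_biUnion]
  ext j
  simp only [Finset.mem_biUnion, Finset.mem_insert, Finset.mem_union, mem_chF, mem_descF]
  constructor
  · rintro ⟨w, hw, (rfl | hj)⟩
    · exact Or.inl hw
    · exact Or.inr ⟨w, hw, hj⟩
  · rintro (h | ⟨w, hw, hj⟩)
    · exact ⟨j, h, Or.inl rfl⟩
    · exact ⟨w, hw, Or.inr hj⟩

lemma chF_disjoint_biUnion (k : Fin d) :
    Disjoint (chF T k) ((chF T k).biUnion (fun w => descF T w)) := by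
  rw [Finset.disjoint_biUnion_right]
  intro w hw
  rw [Finset.disjoint_left]
  intro u hu hud
  exact Set.disjoint_left.1 (T.children_disjoint_desc ((mem_chF T).1 hw))
    ((mem_chF T).1 hu) ((mem_descF T).1 hud)

lemma descF_pairwise_disjoint {k : Fin d} :
    ∀ w ∈ chF T k, ∀ w' ∈ chF T k, w ≠ w' → Disjoint (descF T w) (descF T w') := by
  intro w hw w' hw' hne
  rw [Finset.disjoint_left]
  intro u hu hu'
  exact Set.disjoint_left.1 (T.desc_sibling_disjoint ((mem_chF T).1 hw) ((mem_chF T).1 hw') hne)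
    ((mem_descF T).1 hu) ((mem_descF T).1 hu')

lemma insert_descF_pairwise_disjoint {k : Fin d} :
    (↑(chF T k) : Set (Fin d)).PairwiseDisjoint (fun w => insert w (descF T w)) := by
  intro a ha b hb hab
  simp only [Finset.coe_mem, Finset.mem_coe] at ha hb
  have ha' := (mem_chF T).1 ha
  have hb' := (mem_chF T).1 hb
  refine Finset.disjoint_left.2 ?_
  intro u hu hu'
  rcases Finset.mem_insert.1 hu with rfl | hu <;> rcases Finset.mem_insert.1 hu' with h' | h'
  · exact hab h'
  · exact T.not_sibling_desc ha' hb' ((mem_descF T).1 h')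
  · rw [h'] at hu
    exact T.not_sibling_desc hb' ha' ((mem_descF T).1 hu)
  · exact Set.disjoint_left.1 (T.desc_sibling_disjoint ha' hb' hab)
      ((mem_descF T).1 hu) ((mem_descF T).1 h')

/-- the scalar term of node `k` for a full bond assignment -/
def Gterm (k : Fin d) (γ : ∀ j, Fin (r j)) : ℝ := G k (fun w => γ w.1) (x k) (γ k)

lemma Gterm_local (k : Fin d) (γ γ' : ∀ j, Fin (r j)) (h1 : γ k = γ' k)
    (h2 : ∀ w ∈ T.children k, γ w = γ' w) :
    Gterm T n r G x k γ = Gterm T n r G x k γ' := by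
  unfold Gterm
  have hfun : (fun w : T.children k => γ w.1) = (fun w : T.children k => γ' w.1) :=
    funext fun (w : T.children k) => h2 w.1 w.2
  rw [hfun, h1]

lemma Pprod_local (k : Fin d) (γ γ' : ∀ j, Fin (r j))
    (h : ∀ j ∈ insert k (descF T k), γ j = γ' j) :
    ∏ j ∈ insert k (descF T k), Gterm T n r G x j γ
      = ∏ j ∈ insert k (descF T k), Gterm T n r G x j γ' := by
  apply Finset.prod_congr rfl
  intro j hj
  apply Gterm_local
  · exact h j hj
  · intro w hw
    apply h
    rw [Finset.mem_insert] at hj ⊢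
    rcases hj with rfl | hj
    · exact Or.inr ((mem_descF T).2 (T.children_subset_desc j hw))
    · exact Or.inr ((mem_descF T).2 (T.children_of_desc_subset ((mem_descF T).1 hj) hw))

/-- the partial contraction vector at node `k` -/
def vvec (k : Fin d) (a : Fin (r k)) : ℝ :=
  ∑ α ∈ pinnedFinset (pin0 r hr) (descF T k),
    ∏ j ∈ insert k (descF T k), Gterm T n r G x j (Function.update α k a)

set_option maxHeartbeats 2000000 in
lemma vvec_eq (k : Fin d) (a : Fin (r k)) :
    vvec T n r hr G x k a
      = ∑ b : (w : T.children k) → Fin (r w.1),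
          G k b (x k) a * ∏ w : T.children k, vvec T n r hr G x w.1 (b w) := by
  classical
  set C : Finset (Fin d) := chF T k with hC
  set D : Finset (Fin d) := C.biUnion (fun w => descF T w) with hD
  have hCD : Disjoint C D := chF_disjoint_biUnion T k
  -- step 1: expand product over `insert k (descF k)` into the `k` term and per-child blocks
  have prodlem : ∀ γ : ∀ j, Fin (r j),
      ∏ j ∈ insert k (descF T k), Gterm T n r G x j γ
        = Gterm T n r G x k γ *
            ∏ w ∈ C, ∏ j ∈ insert w (descF T w), Gterm T n r G x j γ := by
    intro γ
    rw [Finset.prod_insert (not_mem_descF_self T k)]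
    congr 1
    rw [descF_eq_biUnion T k]
    exact Finset.prod_biUnion (insert_descF_pairwise_disjoint T)
  have step1 : vvec T n r hr G x k a
      = ∑ α ∈ pinnedFinset (pin0 r hr) (C ∪ D),
          Gterm T n r G x k (Function.update α k a) *
            ∏ w ∈ C, ∏ j ∈ insert w (descF T w), Gterm T n r G x j (Function.update α k a) := by
    rw [vvec, ← descF_eq_union T k]
    exact Finset.sum_congr rfl (fun α _ => prodlem _)
  rw [step1, sum_pinned_union (pin0 r hr) C D hCD]
  -- step 2: rewrite the summand
  have hknotC : ∀ w ∈ T.children k, w ≠ k := fun w hw => hw.2.1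
  have step2 : ∀ α₁ ∈ pinnedFinset (pin0 r hr) C, ∀ α₂ ∈ pinnedFinset (pin0 r hr) D,
      Gterm T n r G x k (Function.update (mergeA C α₁ α₂) k a) *
          ∏ w ∈ C, ∏ j ∈ insert w (descF T w),
            Gterm T n r G x j (Function.update (mergeA C α₁ α₂) k a)
        = G k (fun w => α₁ w.1) (x k) a *
            ∏ w ∈ C, ∏ j ∈ insert w (descF T w),
              Gterm T n r G x j (Function.update α₂ w (α₁ w)) := by
    intro α₁ hα₁ α₂ hα₂
    congr 1
    · unfold Gterm
      rw [Function.update_self]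
      congr 1
      funext w
      rw [Function.update_of_ne (hknotC w.1 w.2)]
      have : w.1 ∈ C := (mem_chF T).2 w.2
      simp [mergeA, this]
    · apply Finset.prod_congr rfl
      intro w hw
      have hwc : w ∈ T.children k := (mem_chF T).1 hw
      have hwk : w ≠ k := hknotC w hwc
      apply Pprod_local
      intro j hj
      rcases Finset.mem_insert.1 hj with rfl | hj
      · rw [Function.update_of_ne hwk, Function.update_self]
        simp [mergeA, hw]
      · have hjd : j ∈ T.desc w := (mem_descF T).1 hj
        have hjk : j ≠ k := by
          intro h
          exact T.not_mem_desc_self k (h ▸ T.desc_child_subset hwc hjd)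
        have hjw : j ≠ w := fun h => T.not_mem_desc_self w (h ▸ hjd)
        have hjC : j ∉ C := fun h =>
          Set.disjoint_left.1 (T.children_disjoint_desc hwc) ((mem_chF T).1 h) hjd
        rw [Function.update_of_ne hjk, Function.update_of_ne hjw]
        simp [mergeA, hjC]
  have hfact : ∀ α₁ : ∀ j, Fin (r j), (∑ α₂ ∈ pinnedFinset (pin0 r hr) D,
      ∏ w ∈ C, ∏ j ∈ insert w (descF T w), Gterm T n r G x j (Function.update α₂ w (α₁ w)))
      = ∏ w ∈ C, vvec T n r hr G x w (α₁ w) := by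
    intro α₁
    rw [hD, sum_pinned_biUnion (pin0 r hr) C (fun w => descF T w) (descF_pairwise_disjoint T)]
    · rfl
    · intro w hw γ γ' hagree
      apply Pprod_local
      intro j hj
      rcases Finset.mem_insert.1 hj with rfl | hj
      · rw [Function.update_self, Function.update_self]
      · have hjw : j ≠ w := by
          intro h
          rw [h] at hj
          exact T.not_mem_desc_self w ((mem_descF T).1 hj)
        rw [Function.update_of_ne hjw, Function.update_of_ne hjw]
        exact hagree j hj
  have main1 : ∀ α₁ ∈ pinnedFinset (pin0 r hr) C,
      (∑ α₂ ∈ pinnedFinset (pin0 r hr) D,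
        Gterm T n r G x k (Function.update (mergeA C α₁ α₂) k a) *
          ∏ w ∈ C, ∏ j ∈ insert w (descF T w),
            Gterm T n r G x j (Function.update (mergeA C α₁ α₂) k a))
      = G k (fun w => α₁ w.1) (x k) a * ∏ w ∈ C, vvec T n r hr G x w (α₁ w) := by
    intro α₁ hα₁
    calc (∑ α₂ ∈ pinnedFinset (pin0 r hr) D,
        Gterm T n r G x k (Function.update (mergeA C α₁ α₂) k a) *
          ∏ w ∈ C, ∏ j ∈ insert w (descF T w),
            Gterm T n r G x j (Function.update (mergeA C α₁ α₂) k a))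
        = ∑ α₂ ∈ pinnedFinset (pin0 r hr) D,
            G k (fun w => α₁ w.1) (x k) a *
              ∏ w ∈ C, ∏ j ∈ insert w (descF T w),
                Gterm T n r G x j (Function.update α₂ w (α₁ w)) :=
          Finset.sum_congr rfl (fun α₂ hα₂ => step2 α₁ hα₁ α₂ hα₂)
      _ = G k (fun w => α₁ w.1) (x k) a *
            ∑ α₂ ∈ pinnedFinset (pin0 r hr) D,
              ∏ w ∈ C, ∏ j ∈ insert w (descF T w),
                Gterm T n r G x j (Function.update α₂ w (α₁ w)) :=
          (Finset.mul_sum _ _ _).symm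
      _ = G k (fun w => α₁ w.1) (x k) a * ∏ w ∈ C, vvec T n r hr G x w (α₁ w) :=
          congrArg _ (hfact α₁)
  refine (Finset.sum_congr rfl main1).trans ?_
  -- step 3: reindex the sum over pinned assignments on C by dependent functions on children
  refine Finset.sum_nbij' (fun α₁ => fun w : T.children k => (α₁ w.1 : Fin (r w.1)))
    (fun b => fun j => if h : j ∈ T.children k then b ⟨j, h⟩ else pin0 r hr j)
    ?_ ?_ ?_ ?_ ?_
  · intro α₁ _; exact Finset.mem_univ _
  · intro b _
    rw [mem_pinnedFinset]
    intro j hj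
    rw [hC, mem_chF] at hj
    exact dif_neg hj
  · intro α₁ hα₁
    funext j
    by_cases h : j ∈ T.children k
    · exact dif_pos h
    · refine (dif_neg h).trans ?_
      exact ((mem_pinnedFinset _).1 hα₁ j (by rw [hC, mem_chF]; exact h)).symm
  · intro b _
    funext w
    exact dif_pos w.2
  · intro α₁ hα₁
    congr 1
    rw [hC]
    exact (Finset.prod_set_coe (s := T.children k)
      (f := fun w => vvec T n r hr G x w (α₁ w))).symm

set_option maxHeartbeats 1000000 in
lemma vvec_norm_le (N : ℕ) : ∀ k : Fin d, (descF T k).card < N →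
    ‖(EuclideanSpace.equiv (Fin (r k)) ℝ).symm (vvec T n r hr G x k)‖
      ≤ ∏ j ∈ insert k (descF T k), tnorm (G j) := by
  induction N with
  | zero => intro k hk; omega
  | succ N ih =>
    intro k hk
    set M : Matrix ((w : T.children k) → Fin (r w.1)) (Fin (r k)) ℝ :=
      Matrix.of (fun b a => G k b (x k) a) with hM
    set uf : ((w : T.children k) → Fin (r w.1)) → ℝ :=
      fun b => ∏ w : T.children k, vvec T n r hr G x w.1 (b w) with huf
    have hvec : (EuclideanSpace.equiv (Fin (r k)) ℝ).symm (vvec T n r hr G x k)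
        = (EuclideanSpace.equiv (Fin (r k)) ℝ).symm (Mᵀ *ᵥ uf) := by
      congr 1
      funext a
      rw [vvec_eq T n r hr G x k a]
      simp only [Matrix.mulVec, dotProduct, Matrix.transpose_apply, hM, Matrix.of_apply,
        huf]
    -- norm of the tensor-product vector
    have hufnn : ∀ w : T.children k, (0:ℝ) ≤ ∑ c : Fin (r w.1), (vvec T n r hr G x w.1 c)^2 :=
      fun w => Finset.sum_nonneg (fun c _ => sq_nonneg _)
    have hunorm : ‖(EuclideanSpace.equiv ((w : T.children k) → Fin (r w.1)) ℝ).symm uf‖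
        = ∏ w : T.children k,
            ‖(EuclideanSpace.equiv (Fin (r w.1)) ℝ).symm (vvec T n r hr G x w.1)‖ := by
      have hprodsq : (∏ w : T.children k,
          ‖(EuclideanSpace.equiv (Fin (r w.1)) ℝ).symm (vvec T n r hr G x w.1)‖)^2
          = ∏ w : T.children k, ∑ c : Fin (r w.1), (vvec T n r hr G x w.1 c)^2 := by
        rw [← Finset.prod_pow]
        apply Finset.prod_congr rfl
        intro w _
        rw [EuclideanSpace.norm_eq, Real.sq_sqrt (Finset.sum_nonneg (fun c _ => sq_nonneg _))]
        apply Finset.sum_congr rfl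
        intro c _
        rw [Real.norm_eq_abs, sq_abs]
        rfl
      rw [EuclideanSpace.norm_eq]
      have hsum : ∑ b : (w : T.children k) → Fin (r w.1),
          ‖(EuclideanSpace.equiv ((w : T.children k) → Fin (r w.1)) ℝ).symm uf b‖^2
          = ∏ w : T.children k, ∑ c : Fin (r w.1), (vvec T n r hr G x w.1 c)^2 := by
        rw [show (∏ w : T.children k, ∑ c : Fin (r w.1), (vvec T n r hr G x w.1 c)^2)
            = ∑ b ∈ Fintype.piFinset (fun _ : T.children k => (Finset.univ : Finset _)),
                ∏ w : T.children k, (vvec T n r hr G x w.1 (b w))^2 from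
          Finset.prod_univ_sum _ _]
        rw [Fintype.piFinset_univ]
        apply Finset.sum_congr rfl
        intro b _
        have hb : (EuclideanSpace.equiv ((w : T.children k) → Fin (r w.1)) ℝ).symm uf b
            = uf b := rfl
        rw [hb, huf, Real.norm_eq_abs, sq_abs, Finset.prod_pow]
      rw [hsum, ← hprodsq, Real.sqrt_sq (Finset.prod_nonneg (fun w _ => norm_nonneg _))]
    -- induction hypothesis applied to each child
    have hIH : ∀ w : T.children k,
        ‖(EuclideanSpace.equiv (Fin (r w.1)) ℝ).symm (vvec T n r hr G x w.1)‖
          ≤ ∏ j ∈ insert w.1 (descF T w.1), tnorm (G j) := by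
      intro w
      apply ih
      have hsub : insert w.1 (descF T w.1) ⊆ descF T k := by
        intro j hj
        rcases Finset.mem_insert.1 hj with rfl | hj
        · exact (mem_descF T).2 (T.children_subset_desc k w.2)
        · exact (mem_descF T).2 (T.desc_child_subset w.2 ((mem_descF T).1 hj))
      have hcard := Finset.card_le_card hsub
      rw [Finset.card_insert_of_notMem (not_mem_descF_self T w.1)] at hcard
      omega
    -- put everything together
    have hprodeq : ∏ w : T.children k, ∏ j ∈ insert w.1 (descF T w.1), tnorm (G j)
        = ∏ j ∈ descF T k, tnorm (G j) := by
      rw [Finset.prod_set_coe (s := T.children k)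
        (f := fun w => ∏ j ∈ insert w (descF T w), tnorm (G j))]
      rw [show (T.children k).toFinset = chF T k from rfl]
      rw [descF_eq_biUnion T k]
      exact (Finset.prod_biUnion (insert_descF_pairwise_disjoint T)).symm
    calc ‖(EuclideanSpace.equiv (Fin (r k)) ℝ).symm (vvec T n r hr G x k)‖
        = ‖(EuclideanSpace.equiv (Fin (r k)) ℝ).symm (Mᵀ *ᵥ uf)‖ := by
          rw [hvec]
      _ ≤ specNorm Mᵀ * ‖(EuclideanSpace.equiv ((w : T.children k) → Fin (r w.1)) ℝ).symm uf‖ :=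
          specNorm_mulVec Mᵀ (WithLp.toLp 2 uf)
      _ = specNorm M * ‖(EuclideanSpace.equiv ((w : T.children k) → Fin (r w.1)) ℝ).symm uf‖ := by
          rw [specNorm_transpose]
      _ ≤ tnorm (G k) * ∏ w : T.children k,
            ‖(EuclideanSpace.equiv (Fin (r w.1)) ℝ).symm (vvec T n r hr G x w.1)‖ := by
          rw [hunorm]
          apply mul_le_mul_of_nonneg_right _ (Finset.prod_nonneg (fun w _ => norm_nonneg _))
          exact specNorm_le_tnorm (G k) (x k)
      _ ≤ tnorm (G k) * ∏ w : T.children k, ∏ j ∈ insert w.1 (descF T w.1), tnorm (G j) := by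
          apply mul_le_mul_of_nonneg_left _ (tnorm_nonneg _)
          exact Finset.prod_le_prod (fun w _ => norm_nonneg _) (fun w _ => hIH w)
      _ = ∏ j ∈ insert k (descF T k), tnorm (G j) := by
          rw [hprodeq, Finset.prod_insert (not_mem_descF_self T k)]

lemma insert_root_descF :
    insert T.root (descF T T.root) = (Finset.univ : Finset (Fin d)) := by
  apply Finset.eq_univ_of_forall
  intro j
  rcases eq_or_ne j T.root with rfl | h
  · exact Finset.mem_insert_self _ _
  · refine Finset.mem_insert_of_mem ((mem_descF T).2 ⟨h, ?_⟩)
    obtain ⟨m, hm⟩ := T.reaches_root j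
    refine ⟨m, ?_, hm⟩
    rcases Nat.eq_zero_or_pos m with rfl | hmpos
    · exact absurd hm h
    · exact hmpos

end MainAux


/-- `‖p‖_∞ ≤ ∏_k ⦀G_k⦀` for a TTNS contraction `p` of cores `G_k`,
each core being viewed as a 3-tensor with middle index `x_k`. -/
theorem ttns_sup_norm_le_prod_tnorm {d : ℕ} (T : ParentTree d) (n r : Fin d → ℕ)
    (hn : ∀ k, 1 ≤ n k) (hr : ∀ w, 1 ≤ r w) (hroot : r T.root = 1)
    (G : ∀ k : Fin d, ((w : T.children k) → Fin (r w.1)) → Fin (n k) → Fin (r k) → ℝ) :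
    ∀ x : ∀ i, Fin (n i), |ttnsContract T n r G x| ≤ ∏ k : Fin d, tnorm (G k) := by
  intro x
  haveI hsing : Subsingleton (Fin (r T.root)) := by
    rw [hroot]; infer_instance
  have hins : insert T.root (descF T T.root) = (Finset.univ : Finset (Fin d)) :=
    insert_root_descF T
  have hpinU : pinnedFinset (pin0 r hr) (descF T T.root)
      = (Finset.univ : Finset (∀ j, Fin (r j))) := by
    apply Finset.eq_univ_of_forall
    intro α
    rw [mem_pinnedFinset]
    intro j hj
    have hjroot : j = T.root := by
      by_contra h
      obtain ⟨m, hm⟩ := T.reaches_root j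
      refine hj ((mem_descF T).2 ⟨h, m, ?_, hm⟩)
      rcases Nat.eq_zero_or_pos m with rfl | hmpos
      · exact absurd hm h
      · exact hmpos
    subst hjroot
    exact Subsingleton.elim _ _
  have hcontract : ttnsContract T n r G x
      = vvec T n r hr G x T.root (pin0 r hr T.root) := by
    rw [ttnsContract, vvec, hpinU, hins]
    apply Finset.sum_congr rfl
    intro α _
    apply Finset.prod_congr rfl
    intro j _
    have hupd : Function.update α T.root (pin0 r hr T.root) = α := by
      funext i
      by_cases h : i = T.root
      · subst h
        rw [Function.update_self]
        exact Subsingleton.elim _ _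
      · rw [Function.update_of_ne h]
    rw [hupd]
    rfl
  have hcoord : |vvec T n r hr G x T.root (pin0 r hr T.root)|
      ≤ ‖(EuclideanSpace.equiv (Fin (r T.root)) ℝ).symm (vvec T n r hr G x T.root)‖ := by
    rw [EuclideanSpace.norm_eq]
    rw [show |vvec T n r hr G x T.root (pin0 r hr T.root)|
        = Real.sqrt ((vvec T n r hr G x T.root (pin0 r hr T.root))^2) from
      (Real.sqrt_sq_eq_abs _).symm]
    apply Real.sqrt_le_sqrt
    have hmem : (pin0 r hr T.root) ∈ (Finset.univ : Finset (Fin (r T.root))) :=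
      Finset.mem_univ _
    have := Finset.single_le_sum
      (f := fun c : Fin (r T.root) =>
        ‖(EuclideanSpace.equiv (Fin (r T.root)) ℝ).symm (vvec T n r hr G x T.root) c‖^2)
      (fun c _ => sq_nonneg _) hmem
    refine le_trans (le_of_eq ?_) this
    simp only [Real.norm_eq_abs, sq_abs]
    try rfl
  have hb := vvec_norm_le T n r hr G x ((descF T T.root).card + 1) T.root
    (Nat.lt_succ_self _)
  calc |ttnsContract T n r G x|
      = |vvec T n r hr G x T.root (pin0 r hr T.root)| := by rw [hcontract]
    _ ≤ ‖(EuclideanSpace.equiv (Fin (r T.root)) ℝ).symm (vvec T n r hr G x T.root)‖ := hcoord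
    _ ≤ ∏ j ∈ insert T.root (descF T T.root), tnorm (G j) := hb
    _ = ∏ k : Fin d, tnorm (G k) := by rw [hins]
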